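/- Let M be a simple connected matroid of rank d+1 ≥ 3 with two different Cremona bases b and b*. Then every connected component H of the support graph G_b(b*) satisfies: V(H) ∩ b* consists of exactly one element b_0 (which lies in b ∩ b*), and H is a simple star with center b_0, i.e., H has |V(H)| − 1 edges, each connecting b_0 to a distinct other vertex of H. -/

import Mathlib

open Set

variable {α : Type*}

/-- The set of non-basis elements on the line through `x` and `y`. -/
def Fij (M : Matroid α) (x y : α) : Set α := M.closure {x, y} \ {x, y}

/-- `b` is a Cremona basis: a base of `M` such that the sets
`Fij = cl{bᵢ,bⱼ} \ {bᵢ,bⱼ}` are pairwise disjoint with union `M.E \ b`. -/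
def IsCremonaBasis (M : Matroid α) (b : Set α) : Prop :=
  M.IsBase b ∧
  (∀ x ∈ b, ∀ y ∈ b, ∀ x' ∈ b, ∀ y' ∈ b, x ≠ y → x' ≠ y' →
    ({x, y} : Set α) ≠ {x', y'} → Disjoint (Fij M x y) (Fij M x' y')) ∧
  (⋃ x ∈ b, ⋃ y ∈ b, ⋃ _ : x ≠ y, Fij M x y) = M.E \ b

/-- The `b`-support of a set `S`. -/
def suppb (M : Matroid α) (b S : Set α) : Set α :=
  (b ∩ S) ∪ ⋃ x ∈ b, ⋃ y ∈ b, ⋃ _ : x ≠ y, ⋃ _ : (S ∩ Fij M x y).Nonempty, ({x, y} : Set α)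

/-- Adjacency in the support graph `G_b(S)`: there is an edge between `x` and `y`
for each element of `S ∩ Fij M x y`. -/
def Adjb (M : Matroid α) (b S : Set α) (x y : α) : Prop :=
  x ∈ b ∧ y ∈ b ∧ x ≠ y ∧ (S ∩ Fij M x y).Nonempty

/-- The support graph `G_b(S)` is connected. -/
def SuppConnected (M : Matroid α) (b S : Set α) : Prop :=
  ∀ x ∈ suppb M b S, ∀ y ∈ suppb M b S, Relation.ReflTransGen (Adjb M b S) x y

/-- The vertex set of the connected component of `x` in the support graph `G_b(S)`. -/
def compOf (M : Matroid α) (b S : Set α) (x : α) : Set α :=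
  {y ∈ suppb M b S | Relation.ReflTransGen (Adjb M b S) x y}

/-- A matroid is simple if every pair of (not necessarily distinct) elements
of the ground set is independent. -/
def MSimple (M : Matroid α) : Prop := ∀ e ∈ M.E, ∀ f ∈ M.E, M.Indep {e, f}

/-- A circuit: a minimal dependent set. -/
def MCircuit (M : Matroid α) (C : Set α) : Prop :=
  C ⊆ M.E ∧ ¬ M.Indep C ∧ ∀ x ∈ C, M.Indep (C \ {x})

/-- A matroid is connected if its ground set is nonempty and every two distinct
elements lie on a common circuit. -/
def MConnected (M : Matroid α) : Prop :=
  M.E.Nonempty ∧ ∀ e ∈ M.E, ∀ f ∈ M.E, e = f ∨ ∃ C, MCircuit M C ∧ e ∈ C ∧ f ∈ C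

/-- The rank of a set in a matroid: the supremum of cardinalities of independent subsets. -/
noncomputable def mRank (M : Matroid α) (X : Set α) : ℕ :=
  sSup {n | ∃ I, M.Indep I ∧ I ⊆ X ∧ I.ncard = n}

section AuxLemmas

variable {M : Matroid α} {b bs : Set α} {e f u v s p x y z : α}

lemma fij_comm (M : Matroid α) (x y : α) : Fij M x y = Fij M y x := by
  rw [Fij, Fij, Set.pair_comm]

lemma exch (M : Matroid α) {e f g : α} (h1 : e ∈ M.closure {f, g}) (h2 : e ∉ M.closure {g}) :
    f ∈ M.closure {e, g} :=
  (Matroid.closure_exchange (X := {g}) ⟨h1, h2⟩).1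

lemma cl_pair_le (M : Matroid α) {a c : α} {X : Set α} (h1 : a ∈ M.closure X)
    (h2 : c ∈ M.closure X) : M.closure {a, c} ⊆ M.closure X :=
  Matroid.closure_subset_closure_of_subset_closure (pair_subset h1 h2)

lemma simple_not_mem_cl (hs : MSimple M) (he : e ∈ M.E) (hf : f ∈ M.E) (hne : e ≠ f) :
    e ∉ M.closure {f} := by
  have h := (hs e he f hf).notMem_closure_diff_of_mem (mem_insert _ _)
  rwa [pair_diff_left hne] at h

lemma indep_no_cl_mem {B A : Set α} {t : α} (hI : M.Indep B) (ht : t ∈ B) (hA : A ⊆ B)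
    (htA : t ∉ A) (h : t ∈ M.closure A) : False := by
  have h1 : A ⊆ B \ {t} := fun a ha => ⟨hA ha, fun h' => htA (h' ▸ ha)⟩
  exact hI.notMem_closure_diff_of_mem ht (M.closure_subset_closure h1 h)

lemma base_mem_pair (hI : M.Indep b) (hp : p ∈ b) (hu : u ∈ b) (hv : v ∈ b)
    (h : p ∈ M.closure {u, v}) : p = u ∨ p = v := by
  by_contra hc
  push_neg at hc
  exact indep_no_cl_mem hI hp (pair_subset hu hv)
    (by simp [hc.1, hc.2]) h

lemma fij_not_mem_base (hI : M.Indep b) (hu : u ∈ b) (hv : v ∈ b) (hx : x ∈ Fij M u v) :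
    x ∉ b := fun hxb => by
  rcases base_mem_pair hI hxb hu hv hx.1 with rfl | rfl
  · exact hx.2 (mem_insert _ _)
  · exact hx.2 (mem_insert_of_mem _ rfl)

lemma cremona_cover (hb : IsCremonaBasis M b) (hx : x ∈ M.E) (hxb : x ∉ b) :
    ∃ y z, y ∈ b ∧ z ∈ b ∧ y ≠ z ∧ x ∈ Fij M y z := by
  have hx' : x ∈ M.E \ b := ⟨hx, hxb⟩
  rw [← hb.2.2] at hx'
  simp only [mem_iUnion] at hx'
  obtain ⟨y, hy, z, hz, hyz, h⟩ := hx'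
  exact ⟨y, z, hy, hz, hyz, h⟩

lemma cremona_uniq {y' z' : α} (hb : IsCremonaBasis M b) (hy : y ∈ b) (hz : z ∈ b)
    (hy' : y' ∈ b) (hz' : z' ∈ b) (hyz : y ≠ z) (hyz' : y' ≠ z')
    (h1 : x ∈ Fij M y z) (h2 : x ∈ Fij M y' z') : ({y, z} : Set α) = {y', z'} := by
  by_contra hne
  exact (hb.2.1 y hy z hz y' hy' z' hz' hyz hyz' hne).ne_of_mem h1 h2 rfl

lemma su0 (hfin : M.E.Finite) {A B J' : Set α} (hAB : M.Indep (A ∪ B)) (hd : Disjoint A B)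
    (hJ' : M.IsBasis J' (M.closure B)) : M.Indep (A ∪ J') := by
  have hA : M.Indep A := hAB.subset subset_union_left
  have hB : M.Indep B := hAB.subset subset_union_right
  have hAE := hA.subset_ground
  have hBE := hB.subset_ground
  have hJ'clB : J' ⊆ M.closure B := hJ'.subset
  have hJ'E : J' ⊆ M.E := hJ'clB.trans (M.closure_subset_ground B)
  have hsub : A ∪ J' ⊆ M.closure (A ∪ B) := by
    apply union_subset
    · exact fun a ha => M.mem_closure_of_mem (Or.inl ha) (union_subset hAE hBE)
    · exact hJ'clB.trans (M.closure_subset_closure subset_union_right)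
  have h1 : M.closure J' = M.closure B := by
    rw [hJ'.closure_eq_closure, Matroid.closure_closure]
  have hclAJ : M.closure (A ∪ J') = M.closure (A ∪ B) := by
    calc M.closure (A ∪ J') = M.closure (A ∪ M.closure J') :=
          (M.closure_union_closure_right_eq A J').symm
    _ = M.closure (A ∪ M.closure B) := by rw [h1]
    _ = M.closure (A ∪ B) := M.closure_union_closure_right_eq A B
  obtain ⟨K, hK⟩ := M.exists_isBasis (A ∪ J') (union_subset hAE hJ'E)
  have hKF : M.IsBasis K (M.closure (A ∪ B)) := by
    refine hK.indep.isBasis_of_subset_of_subset_closure (hK.subset.trans hsub) ?_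
    rw [hK.closure_eq_closure, hclAJ]
  have hABbasis : M.IsBasis (A ∪ B) (M.closure (A ∪ B)) := hAB.isBasis_closure
  have henc : K.encard = (A ∪ B).encard := hKF.encard_eq_encard hABbasis
  have hJenc : J'.encard = B.encard := hJ'.encard_eq_encard hB.isBasis_closure
  have hle : (A ∪ J').encard ≤ K.encard := by
    calc (A ∪ J').encard ≤ A.encard + J'.encard := encard_union_le _ _
    _ = A.encard + B.encard := by rw [hJenc]
    _ = (A ∪ B).encard := (encard_union_eq hd).symm
    _ = K.encard := henc.symm
  have hKeq : K = A ∪ J' :=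
    (hfin.subset (union_subset hAE hJ'E)).eq_of_subset_of_encard_le' hK.subset hle
  rw [← hKeq]
  exact hK.indep

lemma su (hfin : M.E.Finite) {A B I J : Set α} (hAB : M.Indep (A ∪ B)) (hd : Disjoint A B)
    (hI : M.Indep I) (hIA : I ⊆ M.closure A) (hJ : M.Indep J) (hJB : J ⊆ M.closure B) :
    M.Indep (I ∪ J) := by
  obtain ⟨J', hJ', hJJ'⟩ := hJ.subset_isBasis_of_subset hJB (M.closure_subset_ground B)
  have h1 : M.Indep (A ∪ J') := su0 hfin hAB hd hJ'
  have hdisj : Disjoint J' A := by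
    rw [disjoint_left]
    intro a haJ' haA
    have haB : a ∉ B := disjoint_left.mp hd haA
    have h2 : a ∉ M.closure ((A ∪ B) \ {a}) :=
      hAB.notMem_closure_diff_of_mem (Or.inl haA)
    apply h2
    have hBsub : B ⊆ (A ∪ B) \ {a} := fun x hx => ⟨Or.inr hx, fun hxa => haB (hxa ▸ hx)⟩
    exact M.closure_subset_closure hBsub (hJ'.subset haJ')
  obtain ⟨I', hI', hII'⟩ := hI.subset_isBasis_of_subset hIA (M.closure_subset_ground A)
  have h2 : M.Indep (J' ∪ I') := su0 hfin (by rwa [union_comm] at h1) hdisj hI'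
  exact h2.subset (union_subset (hII'.trans subset_union_right) (hJJ'.trans subset_union_left))

lemma exists_third {d : ℕ} (hfin : M.E.Finite) (hsimple : MSimple M) (hd : 2 ≤ d)
    (hrk : mRank M M.E = d + 1) (hb : M.IsBase b) (hu : u ∈ b) (hv : v ∈ b) :
    ∃ w ∈ b, w ≠ u ∧ w ≠ v := by
  by_contra hcon
  push_neg at hcon
  have hsub : b ⊆ ({u, v} : Set α) := by
    intro w hw
    by_cases h : w = u
    · exact Or.inl h
    · exact Or.inr (hcon w hw h)
  have hle : mRank M M.E ≤ 2 := by
    apply csSup_le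
    · exact ⟨0, ∅, M.empty_indep, empty_subset _, by simp⟩
    · rintro n ⟨I, hI, hIE, rfl⟩
      have hIcl : I ⊆ M.closure {u, v} := by
        intro a ha
        have h2 : a ∈ M.E := hIE ha
        rw [← hb.closure_eq] at h2
        exact M.closure_subset_closure hsub h2
      obtain ⟨I', hI', hII'⟩ := hI.subset_isBasis_of_subset hIcl (M.closure_subset_ground _)
      have huvI : M.Indep {u, v} := hsimple u (hb.subset_ground hu) v (hb.subset_ground hv)
      have h2 : I.encard ≤ (2 : ℕ) := by
        calc I.encard ≤ I'.encard := encard_mono hII'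
        _ = ({u, v} : Set α).encard := hI'.encard_eq_encard huvI.isBasis_closure
        _ ≤ 2 := by
            calc ({u, v} : Set α).encard ≤ ({v} : Set α).encard + 1 := encard_insert_le _ _
            _ = 2 := by rw [encard_singleton]; rfl
      rw [Set.encard_le_coe_iff] at h2
      obtain ⟨hfinI, n₀, hn₀, hn₀le⟩ := h2
      rw [Set.ncard_def, hn₀]
      simpa using hn₀le
  rw [hrk] at hle
  omega

set_option maxHeartbeats 1600000 in
lemma configX {d : ℕ} (hfin : M.E.Finite) (hsimple : MSimple M) (hconn : MConnected M)
    (hd : 2 ≤ d) (hrk : mRank M M.E = d + 1)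
    (hb : IsCremonaBasis M b) (hbs : IsCremonaBasis M bs)
    (hu : u ∈ b) (hv : v ∈ b) (hubs : u ∉ bs) (hvbs : v ∉ bs) (huv : u ≠ v)
    (hsbs : s ∈ bs) (hpbs : p ∈ bs) (hsp : s ≠ p) (hsb : s ∉ b) (hpb : p ∉ b)
    (hscl : s ∈ M.closure {u, v}) (hpcl : p ∈ M.closure {u, v})
    (hucl : u ∈ M.closure {s, p}) (hvcl : v ∈ M.closure {s, p}) : False := by
  have hbE : b ⊆ M.E := hb.1.subset_ground
  have hbsE : bs ⊆ M.E := hbs.1.subset_ground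
  have hbI : M.Indep b := hb.1.indep
  have hbsI : M.Indep bs := hbs.1.indep
  have huE := hbE hu; have hvE := hbE hv
  have hsE := hbsE hsbs; have hpE := hbsE hpbs
  set R : Set α := b \ {u, v} with hRdef
  have hRb : R ⊆ b := diff_subset
  have hRE : R ⊆ M.E := hRb.trans hbE
  have hsR : s ∉ R := fun h => hsb (hRb h)
  have hpR : p ∉ R := fun h => hpb (hRb h)
  have htrich : ∀ w ∈ b, (w = u ∨ w = v) ∨ w ∈ R := by
    intro w hw
    by_cases h : w = u ∨ w = v
    · exact Or.inl h
    · push_neg at h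
      exact Or.inr ⟨hw, by simp [h.1, h.2]⟩
  have hclspuv : M.closure {u, v} ⊆ M.closure {s, p} := cl_pair_le M hucl hvcl
  -- C0 : all of bs off the line lies in cl R
  have C0 : ∀ t ∈ bs, t ∉ ({s, p} : Set α) → t ∈ M.closure R := by
    intro t ht htsp
    have htE : t ∈ M.E := hbsE ht
    have hts : t ≠ s := fun h => htsp (h ▸ mem_insert _ _)
    have htp : t ≠ p := fun h => htsp (h ▸ mem_insert_of_mem _ rfl)
    by_cases htb : t ∈ b
    · refine M.mem_closure_of_mem ⟨htb, ?_⟩ hRE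
      rintro (rfl | rfl)
      exacts [hubs ht, hvbs ht]
    obtain ⟨y, z, hy, hz, hyz, htF⟩ := cremona_cover hb htE htb
    have mixed : ∀ y' z' : α, y' ∈ b → z' ∈ b → (y' = u ∨ y' = v) → z' ∈ R →
        t ∈ M.closure {y', z'} → False := by
      intro y' z' hy' hz' hyuv hzR htcl
      have hyE := hbE hy'; have hzE := hbE hz'
      have hybs : y' ∉ bs := by rcases hyuv with rfl | rfl <;> assumption
      have hycl : y' ∈ M.closure {s, p} := by rcases hyuv with rfl | rfl <;> assumption
      have htz : t ≠ z' := fun h => htb (h ▸ hz')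
      by_cases hzbs : z' ∈ bs
      · refine indep_no_cl_mem (A := ({s, p, z'} : Set α)) hbsI ht ?_ ?_ ?_
        · rintro a (rfl | rfl | rfl); exacts [hsbs, hpbs, hzbs]
        · rintro (rfl | rfl | rfl); exacts [hts rfl, htp rfl, htz rfl]
        · refine cl_pair_le M ?_ ?_ htcl
          · refine M.closure_subset_closure ?_ hycl
            intro a ha
            rcases ha with rfl | rfl
            · exact mem_insert _ _
            · exact mem_insert_of_mem _ (mem_insert _ _)
          · exact M.mem_closure_of_mem (by simp)
              (by rintro a (rfl | rfl | rfl); exacts [hsE, hpE, hbE hz'])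
      · obtain ⟨c, e, hc, he, hce, hzF⟩ := cremona_cover hbs hzE hzbs
        have hzc : z' ∈ M.closure {c, e} := hzF.1
        have hzce : z' ∉ ({c, e} : Set α) := hzF.2
        have hsubce : ({c, e} : Set α) ⊆ ({s, p, c, e} : Set α) := by
          rintro a (rfl | rfl)
          · exact mem_insert_of_mem _ (mem_insert_of_mem _ (mem_insert _ _))
          · exact mem_insert_of_mem _ (mem_insert_of_mem _ (mem_insert_of_mem _ rfl))
        have hsubsp : ({s, p} : Set α) ⊆ ({s, p, c, e} : Set α) := by
          rintro a (rfl | rfl)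
          · exact mem_insert _ _
          · exact mem_insert_of_mem _ (mem_insert _ _)
        have htA : t ∈ M.closure ({s, p, c, e} : Set α) := by
          refine cl_pair_le M ?_ ?_ htcl
          · exact M.closure_subset_closure hsubsp hycl
          · exact M.closure_subset_closure hsubce hzc
        have htce : t = c ∨ t = e := by
          by_contra hcon
          push_neg at hcon
          refine indep_no_cl_mem (A := ({s, p, c, e} : Set α)) hbsI ht ?_ ?_ htA
          · rintro a (rfl | rfl | rfl | rfl); exacts [hsbs, hpbs, hc, he]
          · rintro (rfl | rfl | rfl | rfl)
            exacts [hts rfl, htp rfl, hcon.1 rfl, hcon.2 rfl]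
        have core : ∀ e' : α, e' ∈ bs → t ≠ e' → z' ∈ M.closure {t, e'} →
            z' ∉ ({t, e'} : Set α) → False := by
          intro e' he' hte' hzcl hznm
          have heE := hbsE he'
          have hzt : z' ∉ M.closure {t} :=
            simple_not_mem_cl hsimple hzE htE (fun h => htz h.symm)
          have hytz : y' ∈ M.closure {t, z'} := by
            refine exch M ?_ (simple_not_mem_cl hsimple htE hzE htz)
            exact htcl
          have hyte : y' ∈ M.closure {t, e'} := by
            refine cl_pair_le M ?_ hzcl hytz
            exact M.mem_closure_of_mem (mem_insert _ _) (pair_subset htE heE)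
          have hF1 : y' ∈ Fij M t e' := by
            refine ⟨hyte, ?_⟩
            rintro (rfl | rfl)
            · exact htb hy'
            · exact hybs he'
          have hF2 : y' ∈ Fij M s p := by
            refine ⟨hycl, ?_⟩
            rintro (rfl | rfl)
            · exact hsb hy'
            · exact hpb hy'
          have heq := cremona_uniq hbs ht he' hsbs hpbs hte' hsp hF1 hF2
          exact htsp (heq ▸ mem_insert t {e'})
        rcases htce with rfl | rfl
        · exact core e he hce hzc hzce
        · refine core c hc (Ne.symm hce) ?_ ?_
          · rwa [pair_comm] at hzc
          · rwa [pair_comm] at hzce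
    rcases htrich y hy with hyuv | hyR <;> rcases htrich z hz with hzuv | hzR
    · -- both on {u,v} : t ∈ cl {u,v} ⊆ cl {s,p} : contradiction with bs indep
      exfalso
      have htsp' : t ∈ M.closure {s, p} := by
        apply hclspuv
        rcases hyuv with rfl | rfl <;> rcases hzuv with rfl | rfl
        · exact absurd rfl hyz
        · exact htF.1
        · rw [pair_comm]; exact htF.1
        · exact absurd rfl hyz
      exact indep_no_cl_mem hbsI ht (pair_subset hsbs hpbs) htsp htsp'
    · exact absurd (mixed y z hy hz hyuv hzR htF.1) id
    · exact absurd (mixed z y hz hy hzuv hyR (by rw [pair_comm]; exact htF.1)) id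
    · exact cl_pair_le M (M.mem_closure_of_mem hyR hRE) (M.mem_closure_of_mem hzR hRE) htF.1
  -- B' = {s,p} ∪ R is independent
  have hB'E : ({s, p} : Set α) ∪ R ⊆ M.E := union_subset (pair_subset hsE hpE) hRE
  have hclB : M.closure (({s, p} : Set α) ∪ R) = M.E := by
    have hbsub : b ⊆ M.closure (({s, p} : Set α) ∪ R) := by
      intro a ha
      rcases htrich a ha with (rfl | rfl) | haR
      · exact M.closure_subset_closure subset_union_left hucl
      · exact M.closure_subset_closure subset_union_left hvcl
      · exact M.mem_closure_of_mem (Or.inr haR) hB'E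
    apply subset_antisymm (M.closure_subset_ground _)
    rw [← hb.1.closure_eq]
    exact Matroid.closure_subset_closure_of_subset_closure hbsub
  have hspan : M.Spanning (({s, p} : Set α) ∪ R) := by
    rw [Matroid.spanning_iff_closure_eq hB'E]
    exact hclB
  obtain ⟨B2, hB2, hB2sub⟩ := hspan.exists_isBase_subset
  have hbcard : b.encard = 2 + R.encard := by
    have hcup : ({u, v} : Set α) ∪ R = b := union_diff_cancel (pair_subset hu hv)
    rw [← hcup, encard_union_eq disjoint_sdiff_right, encard_pair huv]
  have hcard : (({s, p} : Set α) ∪ R).encard ≤ B2.encard := by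
    calc (({s, p} : Set α) ∪ R).encard ≤ ({s, p} : Set α).encard + R.encard :=
          encard_union_le _ _
    _ = 2 + R.encard := by rw [encard_pair hsp]
    _ = b.encard := hbcard.symm
    _ = B2.encard := hb.1.encard_eq_encard_of_isBase hB2
  have hB'eq : B2 = ({s, p} : Set α) ∪ R :=
    (hfin.subset hB'E).eq_of_subset_of_encard_le' hB2sub hcard
  have hB'indep : M.Indep (({s, p} : Set α) ∪ R) := hB'eq ▸ hB2.indep
  -- C1 : every element of the ground set is on the line or in cl R
  have C1 : ∀ x ∈ M.E, x ∈ M.closure {u, v} ∨ x ∈ M.closure R := by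
    intro x hxE
    by_cases hxb : x ∈ b
    · rcases htrich x hxb with (rfl | rfl) | hxR
      · exact Or.inl (M.mem_closure_of_mem (mem_insert _ _) (pair_subset huE hvE))
      · exact Or.inl (M.mem_closure_of_mem (mem_insert_of_mem _ rfl) (pair_subset huE hvE))
      · exact Or.inr (M.mem_closure_of_mem hxR hRE)
    by_cases hxbs : x ∈ bs
    · by_cases hxsp : x ∈ ({s, p} : Set α)
      · left; rcases hxsp with rfl | rfl; exacts [hscl, hpcl]
      · exact Or.inr (C0 x hxbs hxsp)
    obtain ⟨y, z, hy, hz, hyz, hxF⟩ := cremona_cover hb hxE hxb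
    obtain ⟨c, e, hc, he, hce, hxFs⟩ := cremona_cover hbs hxE hxbs
    have hcE := hbsE hc; have heE := hbsE he
    have mixedstar : ∀ c' e' : α, c' ∈ bs → e' ∈ bs → c' ∈ ({s, p} : Set α) →
        e' ∉ ({s, p} : Set α) → x ∈ M.closure {c', e'} →
        ∀ y' z' : α, (y' = u ∨ y' = v) → z' ∈ R → x ∈ M.closure {y', z'} → False := by
      intro c' e' hc' he' hcsp hesp hxce y' z' hyuv hzR hxyz
      have hycl : y' ∈ M.closure {s, p} := by rcases hyuv with rfl | rfl <;> assumption
      have hyb : y' ∈ b := by rcases hyuv with rfl | rfl <;> assumption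
      have hyE := hbE hyb
      have heR : e' ∈ M.closure R := C0 e' he' hesp
      have hc'E := hbsE hc'; have he'E := hbsE he'
      have hzE := hRE hzR
      have hxz : x ≠ z' := fun h => hxb (h ▸ hRb hzR)
      have hinsE : insert c' R ⊆ M.E := insert_subset hc'E hRE
      have hxcl1 : x ∈ M.closure (insert c' R) := by
        refine cl_pair_le M ?_ ?_ hxce
        · exact M.mem_closure_of_mem (mem_insert _ _) hinsE
        · exact M.closure_subset_closure (subset_insert _ _) heR
      have hyx : y' ∈ M.closure {x, z'} :=
        exch M hxyz (simple_not_mem_cl hsimple hxE hzE hxz)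
      have hycl2 : y' ∈ M.closure (insert c' R) := by
        refine cl_pair_le M hxcl1 ?_ hyx
        exact M.mem_closure_of_mem (mem_insert_of_mem _ hzR) hinsE
      have hUnion : (insert c' R) ∪ ({s, p} : Set α) = ({s, p} : Set α) ∪ R := by
        rcases hcsp with rfl | rfl
        · ext a
          simp only [mem_union, mem_insert_iff, mem_singleton_iff]
          tauto
        · ext a
          simp only [mem_union, mem_insert_iff, mem_singleton_iff]
          tauto
      have hInter : (insert c' R) ∩ ({s, p} : Set α) = ({c'} : Set α) := by
        apply subset_antisymm
        · rintro a ⟨ha1, ha2⟩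
          rcases ha1 with rfl | haR
          · rfl
          · exfalso; rcases ha2 with rfl | rfl; exacts [hsR haR, hpR haR]
        · rintro a ha
          rw [mem_singleton_iff] at ha
          subst ha
          exact ⟨mem_insert _ _, hcsp⟩
      have hIndepU : M.Indep ((insert c' R) ∪ ({s, p} : Set α)) := by rwa [hUnion]
      have hkey := hIndepU.closure_inter_eq_inter_closure
      rw [hInter] at hkey
      have hyc : y' ∈ M.closure ({c'} : Set α) := by
        rw [hkey]; exact ⟨hycl2, hycl⟩
      have hcnb : c' ∉ b := by rcases hcsp with rfl | rfl; exacts [hsb, hpb]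
      have hyne : y' ≠ c' := fun h => hcnb (h ▸ hyb)
      exact simple_not_mem_cl hsimple hyE hc'E hyne hyc
    have hmixed2 : ∀ y' z' : α, (y' = u ∨ y' = v) → z' ∈ R →
        x ∈ M.closure {y', z'} → x ∈ M.closure {u, v} ∨ x ∈ M.closure R := by
      intro y' z' hyuv hzR hxyz
      by_cases hcsp : c ∈ ({s, p} : Set α) <;> by_cases hesp : e ∈ ({s, p} : Set α)
      · -- both: x on the line
        left
        have h1 : c ∈ M.closure {u, v} := by rcases hcsp with rfl | rfl; exacts [hscl, hpcl]
        have h2 : e ∈ M.closure {u, v} := by rcases hesp with rfl | rfl; exacts [hscl, hpcl]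
        exact cl_pair_le M h1 h2 hxFs.1
      · exact absurd (mixedstar c e hc he hcsp hesp hxFs.1 y' z' hyuv hzR hxyz) id
      · refine absurd (mixedstar e c he hc hesp hcsp ?_ y' z' hyuv hzR hxyz) id
        rw [pair_comm]; exact hxFs.1
      · right
        exact cl_pair_le M (C0 c hc hcsp) (C0 e he hesp) hxFs.1
    rcases htrich y hy with hyuv | hyR <;> rcases htrich z hz with hzuv | hzR
    · left
      rcases hyuv with rfl | rfl <;> rcases hzuv with rfl | rfl
      · exact absurd rfl hyz
      · exact hxF.1
      · rw [pair_comm]; exact hxF.1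
      · exact absurd rfl hyz
    · exact hmixed2 y z hyuv hzR hxF.1
    · exact hmixed2 z y hzuv hyR (by rw [pair_comm]; exact hxF.1)
    · exact Or.inr (cl_pair_le M (M.mem_closure_of_mem hyR hRE)
        (M.mem_closure_of_mem hzR hRE) hxF.1)
  -- final contradiction via connectivity
  obtain ⟨w, hw, hwu, hwv⟩ := exists_third hfin hsimple hd hrk hb.1 hu hv
  have hwR : w ∈ R := ⟨hw, by simp [hwu, hwv]⟩
  have hwE := hbE hw
  have hwcl : w ∉ M.closure {u, v} := fun h => by
    rcases base_mem_pair hbI hw hu hv h with rfl | rfl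
    exacts [hwu rfl, hwv rfl]
  rcases hconn.2 u huE w hwE with h | ⟨C, hC, huC, hwC⟩
  · exact hwu h.symm
  have hC1indep : M.Indep (C ∩ M.closure {u, v}) :=
    (hC.2.2 w hwC).subset (fun a ha => ⟨ha.1, fun h => hwcl ((mem_singleton_iff.mp h) ▸ ha.2)⟩)
  have hC2indep : M.Indep (C \ M.closure {u, v}) :=
    (hC.2.2 u huC).subset (fun a ha => ⟨ha.1, fun h => ha.2 (by
      rw [mem_singleton_iff] at h
      rw [h]
      exact M.mem_closure_of_mem (mem_insert _ _) (pair_subset huE hvE))⟩)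
  have hC2cl : C \ M.closure {u, v} ⊆ M.closure R := by
    intro a ha
    rcases C1 a (hC.1 ha.1) with h | h
    · exact absurd h ha.2
    · exact h
  have hC1cl : C ∩ M.closure {u, v} ⊆ M.closure {s, p} := fun a ha => hclspuv ha.2
  have hdisjSP : Disjoint ({s, p} : Set α) R := by
    rw [disjoint_left]
    rintro a (rfl | rfl) haR
    exacts [hsR haR, hpR haR]
  have hind := su hfin hB'indep hdisjSP hC1indep hC1cl hC2indep hC2cl
  rw [inter_union_diff] at hind
  exact hC.2.1 hind

lemma no_bsbs (hbsI : M.Indep bs) {y z : α} (hybs : y ∈ bs) (hzbs : z ∈ bs)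
    (hne : (bs ∩ Fij M y z).Nonempty) : False := by
  obtain ⟨t, htbs, htF⟩ := hne
  exact indep_no_cl_mem hbsI htbs (pair_subset hybs hzbs) htF.2 htF.1

lemma n2a {d : ℕ} (hfin : M.E.Finite) (hsimple : MSimple M) (hconn : MConnected M)
    (hd : 2 ≤ d) (hrk : mRank M M.E = d + 1)
    (hb : IsCremonaBasis M b) (hbs : IsCremonaBasis M bs) {y z s q : α}
    (hy : y ∈ b) (hz : z ∈ b) (hyz : y ≠ z) (hybs : y ∉ bs) (hzbs : z ∉ bs)
    (hsbs : s ∈ bs) (hqbs : q ∈ bs) (hsq : s ≠ q)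
    (hscl : s ∈ M.closure {y, z}) (hsb : s ∉ b)
    (hyF : y ∈ M.closure {s, q}) : False := by
  have hbE := hb.1.subset_ground
  have hbsE := hbs.1.subset_ground
  have hbI := hb.1.indep
  have hyE := hbE hy; have hzE := hbE hz
  have hsE := hbsE hsbs; have hqE := hbsE hqbs
  have hys : y ≠ s := fun h => hsb (h ▸ hy)
  have hqcl : q ∈ M.closure {y, s} := by
    have h1 : y ∈ M.closure {q, s} := by rwa [pair_comm] at hyF
    exact exch M h1 (simple_not_mem_cl hsimple hyE hsE hys)
  have hqyz : q ∈ M.closure {y, z} :=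
    cl_pair_le M (M.mem_closure_of_mem (mem_insert _ _) (pair_subset hyE hzE)) hscl hqcl
  have hqb : q ∉ b := by
    intro hqb
    rcases base_mem_pair hbI hqb hy hz hqyz with rfl | rfl
    exacts [hybs hqbs, hzbs hqbs]
  have hzys : z ∈ M.closure {s, y} := by
    have h1 : s ∈ M.closure {z, y} := by rwa [pair_comm] at hscl
    exact exch M h1 (simple_not_mem_cl hsimple hsE hyE (Ne.symm hys))
  have hzcl : z ∈ M.closure {s, q} :=
    cl_pair_le M (M.mem_closure_of_mem (mem_insert _ _) (pair_subset hsE hqE)) hyF hzys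
  exact configX hfin hsimple hconn hd hrk hb hbs hy hz hybs hzbs hyz hsbs hqbs hsq hsb hqb
    hscl hqyz hyF hzcl

lemma no_nonbs {d : ℕ} (hfin : M.E.Finite) (hsimple : MSimple M) (hconn : MConnected M)
    (hd : 2 ≤ d) (hrk : mRank M M.E = d + 1)
    (hb : IsCremonaBasis M b) (hbs : IsCremonaBasis M bs) {y z : α}
    (hy : y ∈ b) (hz : z ∈ b) (hyz : y ≠ z) (hybs : y ∉ bs) (hzbs : z ∉ bs)
    (hne : (bs ∩ Fij M y z).Nonempty) : False := by
  obtain ⟨s, hsbs, hsF⟩ := hne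
  have hbE := hb.1.subset_ground
  have hbsE := hbs.1.subset_ground
  have hbI := hb.1.indep
  have hbsI := hbs.1.indep
  have hscl : s ∈ M.closure {y, z} := hsF.1
  have hsb : s ∉ b := fij_not_mem_base hbI hy hz hsF
  have hyE := hbE hy; have hzE := hbE hz; have hsE := hbsE hsbs
  obtain ⟨c, e, hc, he, hce, hyF⟩ := cremona_cover hbs hyE hybs
  obtain ⟨c', e', hc', he', hce', hzF⟩ := cremona_cover hbs hzE hzbs
  have hsubce : ({c, e} : Set α) ⊆ ({c, e, c', e'} : Set α) := by
    rintro a (rfl | rfl)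
    · exact mem_insert _ _
    · exact mem_insert_of_mem _ (mem_insert _ _)
  have hsubce' : ({c', e'} : Set α) ⊆ ({c, e, c', e'} : Set α) := by
    rintro a (rfl | rfl)
    · exact mem_insert_of_mem _ (mem_insert_of_mem _ (mem_insert _ _))
    · exact mem_insert_of_mem _ (mem_insert_of_mem _ (mem_insert_of_mem _ rfl))
  have hsA : s ∈ M.closure ({c, e, c', e'} : Set α) := by
    refine cl_pair_le M ?_ ?_ hscl
    · exact M.closure_subset_closure hsubce hyF.1
    · exact M.closure_subset_closure hsubce' hzF.1
  have hsmem : s = c ∨ s = e ∨ s = c' ∨ s = e' := by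
    by_contra hcon
    push_neg at hcon
    obtain ⟨h1, h2, h3, h4⟩ := hcon
    refine indep_no_cl_mem (A := ({c, e, c', e'} : Set α)) hbsI hsbs ?_ ?_ hsA
    · rintro a (rfl | rfl | rfl | rfl); exacts [hc, he, hc', he']
    · rintro (rfl | rfl | rfl | rfl)
      exacts [h1 rfl, h2 rfl, h3 rfl, h4 rfl]
  rcases hsmem with rfl | rfl | rfl | rfl
  · exact n2a hfin hsimple hconn hd hrk hb hbs hy hz hyz hybs hzbs hsbs he hce hscl hsb hyF.1
  · refine n2a hfin hsimple hconn hd hrk hb hbs hy hz hyz hybs hzbs hsbs hc (Ne.symm hce)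
      hscl hsb ?_
    rw [pair_comm]; exact hyF.1
  · refine n2a hfin hsimple hconn hd hrk hb hbs hz hy (Ne.symm hyz) hzbs hybs hsbs he' hce'
      ?_ hsb hzF.1
    rw [pair_comm]; exact hscl
  · refine n2a hfin hsimple hconn hd hrk hb hbs hz hy (Ne.symm hyz) hzbs hybs hsbs hc'
      (Ne.symm hce') ?_ hsb ?_
    · rw [pair_comm]; exact hscl
    · rw [pair_comm]; exact hzF.1

lemma uniq_nbr (hsimple : MSimple M) (hb : IsCremonaBasis M b) (hbs : IsCremonaBasis M bs)
    {u b0 b1 : α} (hu : u ∈ b) (hubs : u ∉ bs)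
    (hb0 : b0 ∈ bs) (hb1 : b1 ∈ bs) (hb0b : b0 ∈ b) (hb1b : b1 ∈ b)
    (hub0 : u ≠ b0) (hub1 : u ≠ b1)
    (h0 : (bs ∩ Fij M u b0).Nonempty) (h1 : (bs ∩ Fij M u b1).Nonempty) : b0 = b1 := by
  have hbE := hb.1.subset_ground
  have hbsE := hbs.1.subset_ground
  have hbI := hb.1.indep
  have key : ∀ b2, b2 ∈ bs → b2 ∈ b → u ≠ b2 → (bs ∩ Fij M u b2).Nonempty →
      ∃ t, t ∈ bs ∧ t ∉ b ∧ t ≠ b2 ∧ u ∈ Fij M t b2 := by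
    intro b2 hb2 hb2b hub2 hne
    obtain ⟨t, htbs, htF⟩ := hne
    have htb : t ∉ b := fij_not_mem_base hbI hu hb2b htF
    have htb2 : t ≠ b2 := fun h => htb (h ▸ hb2b)
    have htE := hbsE htbs
    have hucl : u ∈ M.closure {t, b2} :=
      exch M htF.1 (simple_not_mem_cl hsimple htE (hbE hb2b) htb2)
    refine ⟨t, htbs, htb, htb2, hucl, ?_⟩
    rintro (rfl | rfl)
    · exact htb hu
    · exact hub2 rfl
  obtain ⟨t0, ht0bs, ht0b, ht0b2, hF0⟩ := key b0 hb0 hb0b hub0 h0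
  obtain ⟨t1, ht1bs, ht1b, ht1b2, hF1⟩ := key b1 hb1 hb1b hub1 h1
  have heq := cremona_uniq hbs ht0bs hb0 ht1bs hb1 ht0b2 ht1b2 hF0 hF1
  rcases Set.pair_eq_pair_iff.mp heq with ⟨_, h2⟩ | ⟨_, h2⟩
  · exact h2
  · exact absurd (h2 ▸ hb0b) ht1b

lemma uniq_elt (hsimple : MSimple M) (hb : IsCremonaBasis M b) (hbs : IsCremonaBasis M bs)
    {b0 u e1 e2 : α} (hb0b : b0 ∈ b) (hb0bs : b0 ∈ bs) (hu : u ∈ b) (hub0 : u ≠ b0)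
    (h1 : e1 ∈ bs ∩ Fij M b0 u) (h2 : e2 ∈ bs ∩ Fij M b0 u) : e1 = e2 := by
  by_contra hne
  have hbI := hb.1.indep
  have hbsI := hbs.1.indep
  have hbE := hb.1.subset_ground
  have hbsE := hbs.1.subset_ground
  have he1b : e1 ∉ b := fij_not_mem_base hbI hb0b hu h1.2
  have he2b : e2 ∉ b := fij_not_mem_base hbI hb0b hu h2.2
  have he1E := hbsE h1.1; have he2E := hbsE h2.1
  have hb0E := hbE hb0b; have huE := hbE hu
  have he1b0 : e1 ≠ b0 := fun h => he1b (h ▸ hb0b)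
  have hucl : u ∈ M.closure {e1, b0} := by
    have h3 : e1 ∈ M.closure {u, b0} := by
      have := h1.2.1
      rwa [pair_comm] at this
    exact exch M h3 (simple_not_mem_cl hsimple he1E hb0E he1b0)
  have he2cl : e2 ∈ M.closure {e1, b0} := by
    have hb0m : b0 ∈ M.closure {e1, b0} :=
      M.mem_closure_of_mem (mem_insert_of_mem _ rfl) (pair_subset he1E hb0E)
    exact cl_pair_le M hb0m hucl h2.2.1
  have hb0cl : b0 ∈ M.closure {e2, e1} := by
    have h4 : e2 ∈ M.closure {b0, e1} := by rwa [pair_comm] at he2cl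
    exact exch M h4 (simple_not_mem_cl hsimple he2E he1E (Ne.symm hne))
  refine indep_no_cl_mem hbsI hb0bs (pair_subset h2.1 h1.1) ?_ hb0cl
  rintro (rfl | rfl)
  · exact he2b hb0b
  · exact he1b hb0b

end AuxLemmas

/-- If a simple connected matroid of rank `d+1 ≥ 3` has two different
Cremona bases `b` and `b*`, then every connected component of `G_b(b*)` is a simple
star whose center is the unique vertex in `b ∩ b*` belonging to the component. -/
theorem stmt7 (M : Matroid α) (hfin : M.E.Finite) (hsimple : MSimple M)
    (hconn : MConnected M) (d : ℕ) (hd : 2 ≤ d) (hrk : mRank M M.E = d + 1)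
    (b bs : Set α) (hb : IsCremonaBasis M b) (hbs : IsCremonaBasis M bs) (hne : b ≠ bs) :
    ∀ x ∈ suppb M b bs,
      ∃ b0 ∈ b ∩ bs,
        b0 ∈ compOf M b bs x ∧
        compOf M b bs x ∩ bs = {b0} ∧
        (∀ u ∈ compOf M b bs x, u ≠ b0 → ∃! e, e ∈ bs ∩ Fij M b0 u) ∧
        (∀ u ∈ compOf M b bs x, ∀ v ∈ compOf M b bs x,
          u ≠ b0 → v ≠ b0 → bs ∩ Fij M u v = ∅) := by
  intro x hx
  have hbE := hb.1.subset_ground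
  have hbsE := hbs.1.subset_ground
  have hbsI := hbs.1.indep
  have hsymm : ∀ {a c : α}, Adjb M b bs a c → Adjb M b bs c a := by
    rintro a c ⟨h1, h2, h3, h4⟩
    refine ⟨h2, h1, h3.symm, ?_⟩
    rw [fij_comm]
    exact h4
  have hN1 : ∀ {a c : α}, Adjb M b bs a c → a ∈ bs → c ∈ bs → False := by
    rintro a c ⟨h1, h2, h3, h4⟩ ha hc
    exact no_bsbs hbsI ha hc h4
  have hN2 : ∀ {a c : α}, Adjb M b bs a c → a ∉ bs → c ∉ bs → False := by
    rintro a c ⟨h1, h2, h3, h4⟩ ha hc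
    exact no_nonbs hfin hsimple hconn hd hrk hb hbs h1 h2 h3 ha hc h4
  obtain ⟨b0, hb0b, hb0bs, hx0⟩ :
      ∃ b0, b0 ∈ b ∧ b0 ∈ bs ∧ (x = b0 ∨ Adjb M b bs x b0) := by
    rcases hx with hx | hx
    · exact ⟨x, hx.1, hx.2, Or.inl rfl⟩
    · simp only [mem_iUnion] at hx
      obtain ⟨c, hc, e, he, hnece, hnon, hmem⟩ := hx
      have hAdj : Adjb M b bs c e := ⟨hc, he, hnece, hnon⟩
      simp only [mem_insert_iff, mem_singleton_iff] at hmem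
      by_cases hcbs : c ∈ bs
      · rcases hmem with rfl | rfl
        · exact ⟨x, hc, hcbs, Or.inl rfl⟩
        · exact ⟨c, hc, hcbs, Or.inr (hsymm hAdj)⟩
      · by_cases hebs : e ∈ bs
        · rcases hmem with rfl | rfl
          · exact ⟨e, he, hebs, Or.inr hAdj⟩
          · exact ⟨x, he, hebs, Or.inl rfl⟩
        · exact absurd (hN2 hAdj hcbs hebs) id
  have hreach : Relation.ReflTransGen (Adjb M b bs) x b0 := by
    rcases hx0 with rfl | h
    · exact Relation.ReflTransGen.refl
    · exact Relation.ReflTransGen.single h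
  have hrev : Relation.ReflTransGen (Adjb M b bs) b0 x :=
    @Std.Symm.symm _ _ (@Relation.ReflTransGen.stdSymm _ (Adjb M b bs) ⟨fun _ _ h => hsymm h⟩) _ _ hreach
  have hstar : ∀ y, Relation.ReflTransGen (Adjb M b bs) b0 y → y = b0 ∨ Adjb M b bs b0 y := by
    intro y hy
    induction hy with
    | refl => exact Or.inl rfl
    | @tail m c hab hbc ih =>
      rcases ih with rfl | hadj
      · exact Or.inr hbc
      · have hmbs : m ∉ bs := fun h => hN1 hadj hb0bs h
        by_cases hcbs : c ∈ bs
        · left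
          have h0' : (bs ∩ Fij M m b0).Nonempty := by
            rw [fij_comm]
            exact hadj.2.2.2
          have heq := uniq_nbr hsimple hb hbs hadj.2.1 hmbs hb0bs hcbs hb0b hbc.2.1
            (Ne.symm hadj.2.2.1) hbc.2.2.1 h0' hbc.2.2.2
          exact heq.symm
        · exact absurd (hN2 hbc hmbs hcbs) id
  have hb0supp : b0 ∈ suppb M b bs := Or.inl ⟨hb0b, hb0bs⟩
  have hb0comp : b0 ∈ compOf M b bs x := ⟨hb0supp, hreach⟩
  have hcomp : ∀ y ∈ compOf M b bs x, y = b0 ∨ Adjb M b bs b0 y := by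
    intro y hy
    exact hstar y (hrev.trans hy.2)
  refine ⟨b0, ⟨hb0b, hb0bs⟩, hb0comp, ?_, ?_, ?_⟩
  · apply subset_antisymm
    · rintro y ⟨hyc, hybs⟩
      rcases hcomp y hyc with rfl | hadj
      · rfl
      · exact absurd (hN1 hadj hb0bs hybs) id
    · rintro y hy
      rw [mem_singleton_iff] at hy
      subst hy
      exact ⟨hb0comp, hb0bs⟩
  · intro u huc hune
    rcases hcomp u huc with rfl | hadj
    · exact absurd rfl hune
    obtain ⟨e0, he0⟩ := hadj.2.2.2
    exact ⟨e0, he0, fun e1 he1 =>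
      uniq_elt hsimple hb hbs hb0b hb0bs hadj.2.1 (Ne.symm hadj.2.2.1) he1 he0⟩
  · intro u huc v hvc hune hvne
    rcases hcomp u huc with rfl | hadju
    · exact absurd rfl hune
    rcases hcomp v hvc with rfl | hadjv
    · exact absurd rfl hvne
    have hubs : u ∉ bs := fun h => hN1 hadju hb0bs h
    have hvbs : v ∉ bs := fun h => hN1 hadjv hb0bs h
    rw [eq_empty_iff_forall_notMem]
    rintro t ⟨htbs, htF⟩
    by_cases huveq : u = v
    · subst huveq
      have htu : t ∈ M.closure {u} := by
        have h6 := htF.1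
        rwa [pair_eq_singleton] at h6
      refine simple_not_mem_cl hsimple (hbsE htbs) (hbE hadju.2.1) ?_ htu
      intro h
      exact htF.2 (by simp [h])
    · exact hN2 ⟨hadju.2.1, hadjv.2.1, huveq, ⟨t, htbs, htF⟩⟩ hubs hvbs
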